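/- For real numbers t < b, the integral (1/(2π)) ∫_t^b (x · 4x³)/√((b−x)(x−t)) dx equals (35b⁴ + 20b³t + 18b²t² + 20bt³ + 35t⁴)/64. -/

import Mathlib

open Real MeasureTheory Set intervalIntegral

/-- Coulomb fluid integral for the quartic Freud weight (`v₀'(x) = 4x³`):
`(1/(2π)) ∫_t^b x·4x³/√((b-x)(x-t)) dx = (35b⁴ + 20b³t + 18b²t² + 20bt³ + 35t⁴)/64`. -/
theorem coulomb_integral_quartic (t b : ℝ) (htb : t < b) :
    (1 / (2 * π)) * ∫ x in t..b, (x * (4 * x ^ 3)) / Real.sqrt ((b - x) * (x - t))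
      = (35 * b ^ 4 + 20 * b ^ 3 * t + 18 * b ^ 2 * t ^ 2 + 20 * b * t ^ 3
          + 35 * t ^ 4) / 64 := by
  set r : ℝ := (b - t) / 2 with hr_def
  set c : ℝ := (b + t) / 2 with hc_def
  have hr : 0 < r := by simp [hr_def]; linarith
  set g : ℝ → ℝ := fun θ => c + r * Real.sin θ with hg_def
  -- image
  have himage : g '' Ioo (-(π/2)) (π/2) = Ioo t b := by
    ext x
    constructor
    · rintro ⟨θ, ⟨h1, h2⟩, rfl⟩
      have hs1 : Real.sin θ < 1 := by
        have := Real.strictMonoOn_sin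
          ⟨le_of_lt h1, le_of_lt h2⟩ ⟨by linarith [Real.pi_div_two_pos], le_refl _⟩ h2
        simpa using this
      have hs2 : -1 < Real.sin θ := by
        have := Real.strictMonoOn_sin
          ⟨le_refl _, by linarith [Real.pi_div_two_pos]⟩ ⟨le_of_lt h1, le_of_lt h2⟩ h1
        simpa using this
      constructor
      · simp only [hg_def, hc_def, hr_def]; nlinarith
      · simp only [hg_def, hc_def, hr_def]; nlinarith
    · rintro ⟨h1, h2⟩
      refine ⟨Real.arcsin ((x - c) / r), ⟨?_, ?_⟩, ?_⟩
      · rw [Real.neg_pi_div_two_lt_arcsin, lt_div_iff₀ hr]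
        simp only [hc_def, hr_def]; linarith
      · rw [Real.arcsin_lt_pi_div_two, div_lt_one hr]
        simp only [hc_def, hr_def]; linarith
      · have hl : -1 ≤ (x - c) / r := by
          rw [neg_le, ← neg_div, div_le_iff₀ hr]; simp only [hc_def, hr_def]; linarith
        have hu : (x - c) / r ≤ 1 := by
          rw [div_le_one hr]; simp only [hc_def, hr_def]; linarith
        simp only [hg_def]
        rw [Real.sin_arcsin hl hu]
        field_simp
        ring
  have hmeas : MeasurableSet (Ioo (-(π/2)) (π/2) : Set ℝ) := measurableSet_Ioo
  have hderiv : ∀ θ ∈ Ioo (-(π/2)) (π/2),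
      HasDerivWithinAt g (r * Real.cos θ) (Ioo (-(π/2)) (π/2)) θ := by
    intro θ _
    have : HasDerivAt g (r * Real.cos θ) θ := by
      simpa [hg_def] using ((Real.hasDerivAt_sin θ).const_mul r).const_add c
    exact this.hasDerivWithinAt
  have hinj : InjOn g (Ioo (-(π/2)) (π/2)) := by
    intro x hx y hy hxy
    have := Real.injOn_sin (Ioo_subset_Icc_self hx) (Ioo_subset_Icc_self hy)
    apply this
    have : r * Real.sin x = r * Real.sin y := by
      have := hxy; simp only [hg_def] at this; linarith
    exact mul_left_cancel₀ (ne_of_gt hr) this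
  set f : ℝ → ℝ := fun x => (x * (4 * x ^ 3)) / Real.sqrt ((b - x) * (x - t)) with hf_def
  have key : (∫ x in t..b, f x)
      = ∫ θ in Ioo (-(π/2)) (π/2), |r * Real.cos θ| • f (g θ) := by
    rw [integral_of_le htb.le, MeasureTheory.integral_Ioc_eq_integral_Ioo, ← himage]
    exact MeasureTheory.integral_image_eq_integral_abs_deriv_smul hmeas hderiv hinj f
  have congr1 : (∫ θ in Ioo (-(π/2)) (π/2), |r * Real.cos θ| • f (g θ))
      = ∫ θ in Ioo (-(π/2)) (π/2), 4 * (c + r * Real.sin θ) ^ 4 := by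
    apply MeasureTheory.setIntegral_congr_fun hmeas
    intro θ hθ
    have hcos : 0 < Real.cos θ := Real.cos_pos_of_mem_Ioo hθ
    have hrc : 0 < r * Real.cos θ := mul_pos hr hcos
    have hsqrt : Real.sqrt ((b - g θ) * (g θ - t)) = r * Real.cos θ := by
      have h1 : (b - g θ) * (g θ - t) = (r * Real.cos θ) ^ 2 := by
        have hs := Real.sin_sq_add_cos_sq θ
        have e1 : b - g θ = r * (1 - Real.sin θ) := by
          simp only [hg_def, hc_def, hr_def]; ring
        have e2 : g θ - t = r * (1 + Real.sin θ) := by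
          simp only [hg_def, hc_def, hr_def]; ring
        rw [e1, e2]; linear_combination (-(r^2) : ℝ) * hs
      rw [h1, Real.sqrt_sq hrc.le]
    simp only [hf_def, smul_eq_mul, hsqrt, abs_of_pos hrc]
    field_simp
    ring
  -- compute the sine integral
  have hsin0 : (∫ θ in (-(π/2))..(π/2), Real.sin θ ^ 0) = π := by
    simp only [pow_zero]
    rw [integral_one]
    ring
  have hsin1 : (∫ θ in (-(π/2))..(π/2), Real.sin θ ^ 1) = 0 := by
    simp
  have hsin2 : (∫ θ in (-(π/2))..(π/2), Real.sin θ ^ 2) = π / 2 := by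
    rw [integral_sin_sq]
    simp
  have hsin3 : (∫ θ in (-(π/2))..(π/2), Real.sin θ ^ 3) = 0 := by
    rw [show (3:ℕ) = 1 + 2 from rfl, integral_sin_pow]
    simp
  have hsin4 : (∫ θ in (-(π/2))..(π/2), Real.sin θ ^ 4) = 3 * π / 8 := by
    rw [show (4:ℕ) = 2 + 2 from rfl, integral_sin_pow, hsin2]
    norm_num
    ring
  have hint : (∫ θ in Ioo (-(π/2)) (π/2), 4 * (c + r * Real.sin θ) ^ 4)
      = π * (4 * c ^ 4 + 12 * c ^ 2 * r ^ 2 + (3/2) * r ^ 4) := by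
    rw [← MeasureTheory.integral_Ioc_eq_integral_Ioo,
      ← intervalIntegral.integral_of_le (by linarith [Real.pi_div_two_pos] : -(π/2) ≤ π/2)]
    have expand : ∀ θ : ℝ, 4 * (c + r * Real.sin θ) ^ 4
        = (4 * c ^ 4) * Real.sin θ ^ 0 + (16 * c ^ 3 * r) * Real.sin θ ^ 1
          + (24 * c ^ 2 * r ^ 2) * Real.sin θ ^ 2 + (16 * c * r ^ 3) * Real.sin θ ^ 3
          + (4 * r ^ 4) * Real.sin θ ^ 4 := by
      intro θ; ring
    simp_rw [expand]
    rw [intervalIntegral.integral_add, intervalIntegral.integral_add,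
      intervalIntegral.integral_add, intervalIntegral.integral_add,
      intervalIntegral.integral_const_mul, intervalIntegral.integral_const_mul,
      intervalIntegral.integral_const_mul, intervalIntegral.integral_const_mul,
      intervalIntegral.integral_const_mul, hsin0, hsin1, hsin2, hsin3, hsin4]
    · ring
    all_goals apply Continuous.intervalIntegrable; fun_prop
  rw [key, congr1, hint]
  have hpi : π ≠ 0 := Real.pi_ne_zero
  field_simp [hr_def, hc_def]
  ring
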